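/- For all integers n ≥ m ≥ 1 with n odd, there exists a 3-edge-coloring of the complete graph on 5(n-1)/2 + 1 vertices that contains no rainbow triangle and no monochromatic copy of the double star S(n,m). -/

import Mathlib

open Finset

/-- A symmetric edge-coloring of a complete graph, given as a function on ordered
pairs of vertices. -/
def IsSymmColoring {V C : Type*} (c : V → V → C) : Prop := ∀ u v, c u v = c v u

/-- The coloring `c` contains a rainbow triangle: three vertices whose three
connecting edges get three distinct colors. -/
def HasRainbowTriangle {V C : Type*} (c : V → V → C) : Prop :=
  ∃ u v w : V, u ≠ v ∧ u ≠ w ∧ v ≠ w ∧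
    c u v ≠ c u w ∧ c u v ≠ c v w ∧ c u w ≠ c v w

/-- The coloring `c` contains a monochromatic triangle. -/
def HasMonoTriangle {V C : Type*} (c : V → V → C) : Prop :=
  ∃ u v w : V, u ≠ v ∧ u ≠ w ∧ v ≠ w ∧ c u v = c u w ∧ c u v = c v w

/-- The coloring `c` contains a monochromatic copy of the double star `S(n,m)`:
two adjacent centers `u, v`, a set `A` of `n` further leaves at `u` and a set `B`
of `m` further leaves at `v`, all edges in one color. -/
def HasMonoDoubleStar {V C : Type*} (c : V → V → C) (n m : ℕ) : Prop :=
  ∃ (u v : V) (A B : Finset V) (col : C),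
    u ≠ v ∧ A.card = n ∧ B.card = m ∧ Disjoint A B ∧
    u ∉ A ∧ u ∉ B ∧ v ∉ A ∧ v ∉ B ∧
    c u v = col ∧ (∀ a ∈ A, c u a = col) ∧ (∀ b ∈ B, c v b = col)

/-- Every `k`-edge-coloring of the complete graph on `N` vertices contains a
rainbow triangle or a monochromatic `S(n,m)` (so `gr_k(K_3 : S(n,m)) ≤ N`). -/
def grHolds (k n m N : ℕ) : Prop :=
  ∀ c : Fin N → Fin N → Fin k, IsSymmColoring c →
    HasRainbowTriangle c ∨ HasMonoDoubleStar c n m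

/-- There is a `k`-edge-coloring of the complete graph on `N` vertices with no
rainbow triangle and no monochromatic `S(n,m)` (so `gr_k(K_3 : S(n,m)) > N`). -/
def grAvoid (k n m N : ℕ) : Prop :=
  ∃ c : Fin N → Fin N → Fin k, IsSymmColoring c ∧
    ¬ HasRainbowTriangle c ∧ ¬ HasMonoDoubleStar c n m

/-- Pentagon blow-up color code. -/
def gcol (a b : ℕ) : Fin 3 :=
  if a % 5 = b % 5 then 2
  else if (a % 5 + 5 - b % 5) % 5 = 1 ∨ (a % 5 + 5 - b % 5) % 5 = 4 then 0 else 1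

lemma gcol_symm (a b : ℕ) : gcol a b = gcol b a := by
  unfold gcol
  have ha : a % 5 < 5 := Nat.mod_lt _ (by norm_num)
  have hb : b % 5 < 5 := Nat.mod_lt _ (by norm_num)
  split_ifs <;> first | rfl | omega

lemma gcol_congr {a a' b b' : ℕ} (h1 : a % 5 = a' % 5) (h2 : b % 5 = b' % 5) :
    gcol a b = gcol a' b' := by
  unfold gcol; rw [h1, h2]

lemma gcol_eq_two {a b : ℕ} (h : gcol a b = 2) : a % 5 = b % 5 := by
  unfold gcol at h
  split_ifs at h with h1 h2
  · exact h1
  · exact absurd h (by decide)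
  · exact absurd h (by decide)

lemma gcol_eq_zero {a b : ℕ} (h : gcol a b = 0) :
    b % 5 = (a % 5 + 1) % 5 ∨ b % 5 = (a % 5 + 4) % 5 := by
  unfold gcol at h
  have ha : a % 5 < 5 := Nat.mod_lt _ (by norm_num)
  have hb : b % 5 < 5 := Nat.mod_lt _ (by norm_num)
  split_ifs at h with h1 h2
  · exact absurd h (by decide)
  · omega
  · exact absurd h (by decide)

lemma gcol_eq_one {a b : ℕ} (h : gcol a b = 1) :
    b % 5 = (a % 5 + 2) % 5 ∨ b % 5 = (a % 5 + 3) % 5 := by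
  unfold gcol at h
  have ha : a % 5 < 5 := Nat.mod_lt _ (by norm_num)
  have hb : b % 5 < 5 := Nat.mod_lt _ (by norm_num)
  split_ifs at h with h1 h2
  · exact absurd h (by decide)
  · exact absurd h (by decide)
  · omega

lemma card_two_residues (t a b : ℕ) (hab : a < b) (hb : b < 5)
    (S : Finset (Fin (5 * t + 1)))
    (h : ∀ x ∈ S, (x : ℕ) % 5 = a ∨ (x : ℕ) % 5 = b) : S.card ≤ 2 * t + 1 := by
  classical
  have := Finset.card_le_card_of_injOn
    (f := fun x : Fin (5 * t + 1) => 2 * ((x : ℕ) / 5) + (if (x : ℕ) % 5 = a then 0 else 1))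
    (s := S) (t := Finset.range (2 * t + 1)) ?_ ?_
  · simpa using this
  · intro x hx
    have hx5 := h x hx
    have hxl : (x : ℕ) < 5 * t + 1 := x.isLt
    simp only [Finset.mem_coe, Finset.mem_range]
    split_ifs <;> omega
  · intro x hx y hy hxy
    have hx5 := h x hx
    have hy5 := h y hy
    have hxl : (x : ℕ) < 5 * t + 1 := x.isLt
    have hyl : (y : ℕ) < 5 * t + 1 := y.isLt
    simp only at hxy
    apply Fin.ext
    split_ifs at hxy <;> omega

lemma card_one_residue (t a : ℕ) (S : Finset (Fin (5 * t + 1)))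
    (h : ∀ x ∈ S, (x : ℕ) % 5 = a) : S.card ≤ t + 1 := by
  classical
  have := Finset.card_le_card_of_injOn
    (f := fun x : Fin (5 * t + 1) => (x : ℕ) / 5)
    (s := S) (t := Finset.range (t + 1)) ?_ ?_
  · simpa using this
  · intro x hx
    have hxl : (x : ℕ) < 5 * t + 1 := x.isLt
    simp only [Finset.mem_coe, Finset.mem_range]
    omega
  · intro x hx y hy hxy
    have hx5 := h x hx
    have hy5 := h y hy
    simp only at hxy
    apply Fin.ext
    omega

/-- For n ≥ m ≥ 1, n odd: a rainbow-triangle-free 3-coloring of `K_{5(n-1)/2 + 1}`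
with no monochromatic `S(n,m)`. -/
theorem stmt_2 (n m : ℕ) (hm : 1 ≤ m) (hmn : m ≤ n) (hn : Odd n) :
    grAvoid 3 n m (5 * ((n - 1) / 2) + 1) := by
  obtain ⟨t, rfl⟩ := hn
  have ht : (2 * t + 1 - 1) / 2 = t := by omega
  rw [ht]
  refine ⟨fun u v => gcol (u : ℕ) (v : ℕ), fun u v => gcol_symm _ _, ?_, ?_⟩
  · rintro ⟨u, v, w, huv, huw, hvw, h1, h2, h3⟩
    have key : ∀ a b c : Fin 3, a ≠ b → a ≠ c → b ≠ c → a = 2 ∨ b = 2 ∨ c = 2 := by decide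
    rcases key _ _ _ h1 h2 h3 with h | h | h
    · exact h3 (gcol_congr (gcol_eq_two h) rfl)
    · exact h2 ((gcol_symm _ _).trans (gcol_congr rfl (gcol_eq_two h)))
    · exact h1 (gcol_congr rfl (gcol_eq_two h))
  · rintro ⟨u, v, A, B, col, huv, hA, hB, hAB, huA, huB, hvA, hvB, hcuv, hAcol, hBcol⟩
    have hvA' : v ∉ A := hvA
    have hcard : (insert v A).card = 2 * t + 2 := by
      rw [Finset.card_insert_of_notMem hvA', hA]
    rcases col with ⟨cv, hcv⟩
    interval_cases cv
    · -- color 0 : red, neighbors of u in residues u+1, u+4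
      have hmem : ∀ x ∈ insert v A,
          (x : ℕ) % 5 = ((u : ℕ) % 5 + 1) % 5 ∨ (x : ℕ) % 5 = ((u : ℕ) % 5 + 4) % 5 := by
        intro x hx
        rcases Finset.mem_insert.1 hx with rfl | hx
        · exact gcol_eq_zero hcuv
        · exact gcol_eq_zero (hAcol x hx)
      set p := ((u : ℕ) % 5 + 1) % 5 with hp
      set q := ((u : ℕ) % 5 + 4) % 5 with hq
      have hu5 : (u : ℕ) % 5 < 5 := Nat.mod_lt _ (by norm_num)
      have hpq : p ≠ q := by omega
      have := card_two_residues t (min p q) (max p q) (by omega) (by omega)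
        (insert v A) (fun x hx => by rcases hmem x hx with h | h <;> omega)
      omega
    · -- color 1 : blue
      have hmem : ∀ x ∈ insert v A,
          (x : ℕ) % 5 = ((u : ℕ) % 5 + 2) % 5 ∨ (x : ℕ) % 5 = ((u : ℕ) % 5 + 3) % 5 := by
        intro x hx
        rcases Finset.mem_insert.1 hx with rfl | hx
        · exact gcol_eq_one hcuv
        · exact gcol_eq_one (hAcol x hx)
      set p := ((u : ℕ) % 5 + 2) % 5 with hp
      set q := ((u : ℕ) % 5 + 3) % 5 with hq
      have hu5 : (u : ℕ) % 5 < 5 := Nat.mod_lt _ (by norm_num)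
      have hpq : p ≠ q := by omega
      have := card_two_residues t (min p q) (max p q) (by omega) (by omega)
        (insert v A) (fun x hx => by rcases hmem x hx with h | h <;> omega)
      omega
    · -- color 2 : green, all in one residue class
      have huvA : u ∉ insert v A := by
        simp only [Finset.mem_insert]
        push_neg
        exact ⟨huv, huA⟩
      have hcard2 : (insert u (insert v A)).card = 2 * t + 3 := by
        rw [Finset.card_insert_of_notMem huvA, hcard]
      have hmem : ∀ x ∈ insert u (insert v A), (x : ℕ) % 5 = (u : ℕ) % 5 := by
        intro x hx
        rcases Finset.mem_insert.1 hx with rfl | hx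
        · rfl
        rcases Finset.mem_insert.1 hx with rfl | hx
        · exact (gcol_eq_two hcuv).symm
        · exact (gcol_eq_two (hAcol x hx)).symm
      have := card_one_residue t ((u : ℕ) % 5) (insert u (insert v A)) hmem
      omega
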